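/- Let V_A ∈ ℂ^{m×m} and V_B ∈ ℂ^{n×n} be invertible, C ∈ ℂ^{m×n}, G ∈ ℂ^{m×n}, and E ∈ ℂ^{m×n} with |E_{ij}| ≤ (max_{i,j}|G_{ij}|)·u for all i, j, for some u ≥ 0. Define F := V_A (G ∘ (V_A⁻¹ C V_B)) V_B⁻¹ and F̂ := V_A ((G + E) ∘ (V_A⁻¹ C V_B)) V_B⁻¹, where ∘ is the entrywise (Hadamard) product. Then ‖F − F̂‖_F ≤ κ(V_A)·κ(V_B)·‖C‖_F·(max_{i,j}|G_{ij}|)·u, where ‖·‖_F is the Frobenius norm and κ(V) := ‖V‖·‖V⁻¹‖ with ‖·‖ the spectral norm. -/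

import Mathlib

open Matrix
open scoped Matrix.Norms.L2Operator

/-- The Frobenius norm of a complex matrix. -/
noncomputable def frobNorm {I J : Type*} [Fintype I] [Fintype J]
    (M : Matrix I J ℂ) : ℝ :=
  Real.sqrt (∑ i, ∑ j, ‖M i j‖ ^ 2)

lemma frobNorm_nonneg {I J : Type*} [Fintype I] [Fintype J] (M : Matrix I J ℂ) :
    0 ≤ frobNorm M := Real.sqrt_nonneg _

lemma frobNorm_sum_nonneg {I J : Type*} [Fintype I] [Fintype J] (M : Matrix I J ℂ) :
    0 ≤ ∑ i, ∑ j, ‖M i j‖ ^ 2 := by positivity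

lemma frobNorm_sq {I J : Type*} [Fintype I] [Fintype J] (M : Matrix I J ℂ) :
    frobNorm M ^ 2 = ∑ i, ∑ j, ‖M i j‖ ^ 2 :=
  Real.sq_sqrt (frobNorm_sum_nonneg M)

lemma frobNorm_conjTranspose {I J : Type*} [Fintype I] [Fintype J] (M : Matrix I J ℂ) :
    frobNorm Mᴴ = frobNorm M := by
  unfold frobNorm
  rw [Finset.sum_comm]
  simp [Matrix.conjTranspose_apply]

lemma frobNorm_neg {I J : Type*} [Fintype I] [Fintype J] (M : Matrix I J ℂ) :
    frobNorm (-M) = frobNorm M := by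
  unfold frobNorm
  simp

/-- `‖P X‖_F ≤ ‖P‖ ‖X‖_F`. -/
lemma frobNorm_mul_left {a b : ℕ} (P : Matrix (Fin a) (Fin a) ℂ)
    (X : Matrix (Fin a) (Fin b) ℂ) :
    frobNorm (P * X) ≤ ‖P‖ * frobNorm X := by
  have key : frobNorm (P * X) ^ 2 ≤ (‖P‖ * frobNorm X) ^ 2 := by
    rw [frobNorm_sq, Finset.sum_comm]
    have hcol : ∀ j : Fin b,
        ∑ i, ‖(P * X) i j‖ ^ 2 ≤ ‖P‖ ^ 2 * ∑ k, ‖X k j‖ ^ 2 := by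
      intro j
      set x : EuclideanSpace ℂ (Fin a) := (EuclideanSpace.equiv (Fin a) ℂ).symm (fun k => X k j)
      have hx : ‖x‖ ^ 2 = ∑ k, ‖X k j‖ ^ 2 := by
        rw [EuclideanSpace.norm_eq, Real.sq_sqrt (by positivity)]
        simp [x]
      have hmv := Matrix.l2_opNorm_mulVec P x
      have hy : ‖(EuclideanSpace.equiv (Fin a) ℂ).symm (P *ᵥ x)‖ ^ 2
          = ∑ i, ‖(P * X) i j‖ ^ 2 := by
        rw [EuclideanSpace.norm_eq, Real.sq_sqrt (by positivity)]
        refine Finset.sum_congr rfl fun i _ => ?_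
        simp [Matrix.mulVec, Matrix.mul_apply, dotProduct, x]
      calc ∑ i, ‖(P * X) i j‖ ^ 2
          = ‖(EuclideanSpace.equiv (Fin a) ℂ).symm (P *ᵥ x)‖ ^ 2 := hy.symm
        _ ≤ (‖P‖ * ‖x‖) ^ 2 := by
            apply pow_le_pow_left₀ (norm_nonneg _) hmv
        _ = ‖P‖ ^ 2 * ‖x‖ ^ 2 := by ring
        _ = ‖P‖ ^ 2 * ∑ k, ‖X k j‖ ^ 2 := by rw [hx]
    calc ∑ j, ∑ i, ‖(P * X) i j‖ ^ 2
        ≤ ∑ j, ‖P‖ ^ 2 * ∑ k, ‖X k j‖ ^ 2 :=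
          Finset.sum_le_sum fun j _ => hcol j
      _ = ‖P‖ ^ 2 * ∑ j, ∑ k, ‖X k j‖ ^ 2 := by rw [Finset.mul_sum]
      _ = (‖P‖ * frobNorm X) ^ 2 := by
          rw [mul_pow, frobNorm_sq, Finset.sum_comm]
  have h1 : 0 ≤ ‖P‖ * frobNorm X := mul_nonneg (norm_nonneg _) (frobNorm_nonneg _)
  nlinarith [frobNorm_nonneg (P * X)]

/-- `‖X Q‖_F ≤ ‖X‖_F ‖Q‖`. -/
lemma frobNorm_mul_right {a b : ℕ} (X : Matrix (Fin a) (Fin b) ℂ)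
    (Q : Matrix (Fin b) (Fin b) ℂ) :
    frobNorm (X * Q) ≤ frobNorm X * ‖Q‖ := by
  have h : frobNorm (X * Q) = frobNorm (Qᴴ * Xᴴ) := by
    rw [← Matrix.conjTranspose_mul, frobNorm_conjTranspose]
  rw [h]
  calc frobNorm (Qᴴ * Xᴴ) ≤ ‖Qᴴ‖ * frobNorm Xᴴ := frobNorm_mul_left _ _
    _ = frobNorm X * ‖Q‖ := by
        rw [Matrix.l2_opNorm_conjTranspose, frobNorm_conjTranspose, mul_comm]

/-- Hadamard product bound: if `|E i j| ≤ c` then `‖E ∘ M‖_F ≤ c ‖M‖_F`. -/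
lemma frobNorm_hadamard_le {a b : ℕ} (E M : Matrix (Fin a) (Fin b) ℂ) (c : ℝ)
    (hc : 0 ≤ c) (hE : ∀ i j, ‖E i j‖ ≤ c) :
    frobNorm (Matrix.hadamard E M) ≤ c * frobNorm M := by
  unfold frobNorm
  rw [← Real.sqrt_sq hc, ← Real.sqrt_mul (by positivity)]
  apply Real.sqrt_le_sqrt
  rw [Finset.mul_sum]
  refine Finset.sum_le_sum fun i _ => ?_
  rw [Finset.mul_sum]
  refine Finset.sum_le_sum fun j _ => ?_
  rw [Matrix.hadamard_apply, norm_mul, ← mul_pow]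
  have h1 : ‖E i j‖ * ‖M i j‖ ≤ c * ‖M i j‖ :=
    mul_le_mul_of_nonneg_right (hE i j) (norm_nonneg _)
  exact pow_le_pow_left₀ (by positivity) h1 2

theorem diagonalization_forward_error (m n : ℕ)
    (V_A : Matrix (Fin m) (Fin m) ℂ) (V_B : Matrix (Fin n) (Fin n) ℂ)
    (hA : IsUnit V_A) (hB : IsUnit V_B)
    (C G E : Matrix (Fin m) (Fin n) ℂ) (u : ℝ) (hu : 0 ≤ u)
    (hE : ∀ i j, ‖E i j‖ ≤ (⨆ ij : Fin m × Fin n, ‖G ij.1 ij.2‖) * u) :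
    frobNorm (V_A * (Matrix.hadamard G (V_A⁻¹ * C * V_B)) * V_B⁻¹
        - V_A * (Matrix.hadamard (G + E) (V_A⁻¹ * C * V_B)) * V_B⁻¹) ≤
      (‖V_A‖ * ‖V_A⁻¹‖) * (‖V_B‖ * ‖V_B⁻¹‖) * frobNorm C *
        (⨆ ij : Fin m × Fin n, ‖G ij.1 ij.2‖) * u := by
  set g : ℝ := ⨆ ij : Fin m × Fin n, ‖G ij.1 ij.2‖ with hg
  have hg0 : 0 ≤ g := Real.iSup_nonneg fun ij => norm_nonneg _
  set M : Matrix (Fin m) (Fin n) ℂ := V_A⁻¹ * C * V_B with hM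
  have hdiff : V_A * (Matrix.hadamard G M) * V_B⁻¹
      - V_A * (Matrix.hadamard (G + E) M) * V_B⁻¹
      = -(V_A * (Matrix.hadamard E M) * V_B⁻¹) := by
    rw [Matrix.add_hadamard, Matrix.mul_add, Matrix.add_mul]
    abel
  rw [hdiff, frobNorm_neg]
  have hfM : frobNorm M ≤ ‖V_A⁻¹‖ * frobNorm C * ‖V_B‖ := by
    calc frobNorm (V_A⁻¹ * C * V_B) ≤ frobNorm (V_A⁻¹ * C) * ‖V_B‖ :=
          frobNorm_mul_right _ _
      _ ≤ ‖V_A⁻¹‖ * frobNorm C * ‖V_B‖ :=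
          mul_le_mul_of_nonneg_right (frobNorm_mul_left _ _) (norm_nonneg _)
  have hH : frobNorm (Matrix.hadamard E M) ≤ (g * u) * frobNorm M :=
    frobNorm_hadamard_le E M (g * u) (mul_nonneg hg0 hu) hE
  calc frobNorm (V_A * Matrix.hadamard E M * V_B⁻¹)
      ≤ frobNorm (V_A * Matrix.hadamard E M) * ‖V_B⁻¹‖ := frobNorm_mul_right _ _
    _ ≤ (‖V_A‖ * frobNorm (Matrix.hadamard E M)) * ‖V_B⁻¹‖ :=
        mul_le_mul_of_nonneg_right (frobNorm_mul_left _ _) (norm_nonneg _)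
    _ ≤ (‖V_A‖ * ((g * u) * frobNorm M)) * ‖V_B⁻¹‖ := by
        have := mul_le_mul_of_nonneg_left hH (norm_nonneg V_A)
        exact mul_le_mul_of_nonneg_right this (norm_nonneg _)
    _ ≤ (‖V_A‖ * ((g * u) * (‖V_A⁻¹‖ * frobNorm C * ‖V_B‖))) * ‖V_B⁻¹‖ := by
        have h1 : (g * u) * frobNorm M ≤ (g * u) * (‖V_A⁻¹‖ * frobNorm C * ‖V_B‖) :=
          mul_le_mul_of_nonneg_left hfM (mul_nonneg hg0 hu)
        exact mul_le_mul_of_nonneg_right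
          (mul_le_mul_of_nonneg_left h1 (norm_nonneg _)) (norm_nonneg _)
    _ = (‖V_A‖ * ‖V_A⁻¹‖) * (‖V_B‖ * ‖V_B⁻¹‖) * frobNorm C * g * u := by ring
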